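/- Let (g,⟨·,·⟩,D,θ) be an h-graded (ℝ,ℤ₂)-equivariant metric Lie algebra. Let Der(g)ᴰ₋ := {φ : g → g linear : φ is a derivation, ⟨φx,y⟩ = −⟨x,φy⟩ for all x,y, φ∘D = D∘φ, θ∘φ = −φ∘θ}. Let Z² denote the space of alternating bilinear forms ω on g with ω([x,y],z) + ω([y,z],x) + ω([z,x],y) = 0 for all x,y,z, let B² := {ω : ∃ x₀ ∈ g with ω(x,y) = ⟨x₀,[x,y]⟩ for all x,y}, and let Z²ᴰ₋ (resp. B²ᴰ₋) be the set of ω in Z² (resp. B²) satisfying ω(Dx,y) + ω(x,Dy) = 0 and ω(θx,θy) = −ω(x,y) for all x,y. Then the map φ ↦ ω_φ with ω_φ(x,y) := ⟨φ(x),y⟩ is a linear bijection from the space of antisymmetric derivations of g onto Z², it maps ad(g) onto B² and Der(g)ᴰ₋ onto Z²ᴰ₋, one has Der(g)ᴰ₋ ∩ ad(g) = ad(g₋⁺) where g₋⁺ := ker(θ + id) ∩ ker D, and hence the map induces a linear isomorphism Out(g)ᴰ₋ := Der(g)ᴰ₋/ad(g₋⁺) ≅ H²(g,ℝ)ᴰ₋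 := Z²ᴰ₋/B²ᴰ₋. -/

import Mathlib

open LinearMap

/-- The map φ ↦ ω_φ = ⟨φ(·),·⟩. -/
def iota7 {g : Type*} [AddCommGroup g] [Module ℝ g]
    (B : LinearMap.BilinForm ℝ g) (φ : g →ₗ[ℝ] g) : LinearMap.BilinForm ℝ g :=
  B ∘ₗ φ

/-- The set of 2-cocycles on g with values in ℝ. -/
def Z2set (g : Type*) [LieRing g] [LieAlgebra ℝ g] : Set (LinearMap.BilinForm ℝ g) :=
  {ω | (∀ x, ω x x = 0) ∧ ∀ x y z : g, ω ⁅x, y⁆ z + ω ⁅y, z⁆ x + ω ⁅z, x⁆ y = 0}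

/-- The set of 2-coboundaries ω(x,y) = ⟨x₀,[x,y]⟩. -/
def B2set {g : Type*} [LieRing g] [LieAlgebra ℝ g] (B : LinearMap.BilinForm ℝ g) :
    Set (LinearMap.BilinForm ℝ g) :=
  {ω | ∃ x₀ : g, ∀ x y : g, ω x y = B x₀ ⁅x, y⁆}

/-- D-invariant and θ-anti-invariant bilinear forms. -/
def DThetaSet {g : Type*} [AddCommGroup g] [Module ℝ g] (D θ : g →ₗ[ℝ] g) :
    Set (LinearMap.BilinForm ℝ g) :=
  {ω | (∀ x y, ω (D x) y + ω x (D y) = 0) ∧ ∀ x y, ω (θ x) (θ y) = -(ω x y)}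

/-- Antisymmetric derivations of the metric Lie algebra (g,B). -/
def AntisymDer {g : Type*} [LieRing g] [LieAlgebra ℝ g] (B : LinearMap.BilinForm ℝ g) :
    Set (g →ₗ[ℝ] g) :=
  {φ | (∀ x y : g, φ ⁅x, y⁆ = ⁅φ x, y⁆ + ⁅x, φ y⁆) ∧ ∀ x y, B (φ x) y = -(B x (φ y))}

/-- Antisymmetric derivations commuting with D and anticommuting with θ. -/
def DerDm {g : Type*} [LieRing g] [LieAlgebra ℝ g] (B : LinearMap.BilinForm ℝ g)
    (D θ : g →ₗ[ℝ] g) : Set (g →ₗ[ℝ] g) :=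
  AntisymDer B ∩ {φ | φ ∘ₗ D = D ∘ₗ φ ∧ θ ∘ₗ φ = -(φ ∘ₗ θ)}

/-- For an h-graded (ℝ,ℤ₂)-equivariant metric Lie algebra, φ ↦ ⟨φ(·),·⟩ is a linear
bijection of the antisymmetric derivations onto Z², maps ad(g) onto B² and Der(g)ᴰ₋ onto
Z²ᴰ₋, satisfies Der(g)ᴰ₋ ∩ ad(g) = ad(g₋⁺), and induces the isomorphism
Out(g)ᴰ₋ ≅ H²(g,ℝ)ᴰ₋. -/
theorem stmt7 {g : Type*} [LieRing g] [LieAlgebra ℝ g] [Module.Finite ℝ g]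
    (B : LinearMap.BilinForm ℝ g)
    (hsymm : ∀ x y, B x y = B y x)
    (hnd : B.Nondegenerate)
    (hinv : ∀ x y z : g, B ⁅x, y⁆ z + B y ⁅x, z⁆ = 0)
    (D : g →ₗ[ℝ] g)
    (hDder : ∀ x y : g, D ⁅x, y⁆ = ⁅D x, y⁆ + ⁅x, D y⁆)
    (hDskew : ∀ x y, B (D x) y = -(B x (D y)))
    (hD3 : D ∘ₗ D ∘ₗ D = -D)
    (θ : g →ₗ[ℝ] g)
    (hθ2 : θ ∘ₗ θ = LinearMap.id)
    (hθlie : ∀ x y : g, θ ⁅x, y⁆ = ⁅θ x, θ y⁆)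
    (hθiso : ∀ x y, B (θ x) (θ y) = B x y)
    (hDθ : D ∘ₗ θ = -(θ ∘ₗ D)) :
    (∀ φ ψ : g →ₗ[ℝ] g, iota7 B (φ + ψ) = iota7 B φ + iota7 B ψ) ∧
      (∀ (c : ℝ) (φ : g →ₗ[ℝ] g), iota7 B (c • φ) = c • iota7 B φ) ∧
      Set.BijOn (iota7 B) (AntisymDer B) (Z2set g) ∧
      iota7 B '' {φ : g →ₗ[ℝ] g | ∃ x₀ : g, ∀ y, φ y = ⁅x₀, y⁆} = B2set B ∧
      Set.BijOn (iota7 B) (DerDm B D θ) (Z2set g ∩ DThetaSet D θ) ∧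
      DerDm B D θ ∩ {φ : g →ₗ[ℝ] g | ∃ x₀ : g, ∀ y, φ y = ⁅x₀, y⁆} =
        {φ : g →ₗ[ℝ] g | ∃ x₀ ∈ LinearMap.ker (θ + LinearMap.id) ⊓ LinearMap.ker D,
          ∀ y, φ y = ⁅x₀, y⁆} ∧
      (∀ φ ∈ DerDm B D θ, ∀ ψ ∈ DerDm B D θ,
        ((∃ x₀ ∈ LinearMap.ker (θ + LinearMap.id) ⊓ LinearMap.ker D,
            ∀ y, φ y - ψ y = ⁅x₀, y⁆) ↔
          iota7 B φ - iota7 B ψ ∈ B2set B ∩ DThetaSet D θ)) := by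
  classical
  have hθp : ∀ v : g, θ (θ v) = v := fun v => LinearMap.congr_fun hθ2 v
  have hDθp : ∀ v : g, D (θ v) = -θ (D v) := by
    intro v
    have := LinearMap.congr_fun hDθ v
    simpa using this
  have hθDp : ∀ v : g, θ (D v) = -D (θ v) := by
    intro v; rw [hDθp v, neg_neg]
  have hD3p : ∀ v : g, D (D (D v)) = -D v := by
    intro v
    have := LinearMap.congr_fun hD3 v
    simpa using this
  have hB2 : ∀ x y z : g, B ⁅x, y⁆ z = B x ⁅y, z⁆ := by
    intro x y z
    have h1 := hinv y x z
    have h2 : (⁅y, x⁆ : g) = -⁅x, y⁆ := by rw [← lie_skew]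
    rw [h2, map_neg, LinearMap.neg_apply] at h1
    linarith
  have happ : ∀ (φ : g →ₗ[ℝ] g) (x y : g), iota7 B φ x y = B (φ x) y := fun _ _ _ => rfl
  have hadd : ∀ φ ψ : g →ₗ[ℝ] g, iota7 B (φ + ψ) = iota7 B φ + iota7 B ψ := by
    intro φ ψ; ext x y; simp [iota7]
  have hsmul : ∀ (c : ℝ) (φ : g →ₗ[ℝ] g), iota7 B (c • φ) = c • iota7 B φ := by
    intro c φ; ext x y; simp [iota7]
  have hsub : ∀ φ ψ : g →ₗ[ℝ] g, iota7 B (φ - ψ) = iota7 B φ - iota7 B ψ := by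
    intro φ ψ; ext x y; simp [iota7]
  have hext : ∀ v w : g, (∀ y, B v y = B w y) → v = w := by
    intro v w h
    have h0 : ∀ y, B (v - w) y = 0 := by
      intro y; rw [map_sub, LinearMap.sub_apply, h y, sub_self]
    have := hnd.1 _ h0
    rwa [sub_eq_zero] at this
  have hinj : ∀ φ ψ : g →ₗ[ℝ] g, iota7 B φ = iota7 B ψ → φ = ψ := by
    intro φ ψ h
    ext x
    exact hext _ _ fun y => LinearMap.congr_fun (LinearMap.congr_fun h x) y
  have hskw : ∀ ω : LinearMap.BilinForm ℝ g, (∀ x, ω x x = 0) → ∀ x y, ω x y = -ω y x := by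
    intro ω h x y
    have h1 := h (x + y)
    have h2 := h x
    have h3 := h y
    simp only [map_add, LinearMap.add_apply] at h1
    linarith
  -- maps AntisymDer into Z2
  have hmt : ∀ φ ∈ AntisymDer B, iota7 B φ ∈ Z2set g := by
    rintro φ ⟨hder, hasym⟩
    constructor
    · intro x
      have h1 := hasym x x
      have h2 := hsymm (φ x) x
      rw [happ]
      linarith
    · intro x y z
      simp only [happ]
      have key : ∀ a b c : g, B (φ ⁅a, b⁆) c = B (φ a) ⁅b, c⁆ - B (φ b) ⁅a, c⁆ := by
        intro a b c
        rw [hder a b, map_add, LinearMap.add_apply, hB2 (φ a) b c]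
        have h4 : (⁅a, φ b⁆ : g) = -⁅φ b, a⁆ := by rw [← lie_skew]
        rw [h4, map_neg, LinearMap.neg_apply, hB2 (φ b) a c]
        ring
      have key2 : ∀ a b c : g, B (φ ⁅a, b⁆) c = -B (φ c) ⁅a, b⁆ := by
        intro a b c
        rw [hasym ⁅a, b⁆ c, hsymm ⁅a, b⁆ (φ c)]
      have e1 := key x y z
      have e2 := key y z x
      have e3 := key z x y
      have f1 := key2 x y z
      have f2 := key2 y z x
      have f3 := key2 z x y
      have g1 : B (φ x) ⁅z, y⁆ = -B (φ x) ⁅y, z⁆ := by rw [← lie_skew, map_neg]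
      have g2 : B (φ y) ⁅x, z⁆ = -B (φ y) ⁅z, x⁆ := by rw [← lie_skew, map_neg]
      have g3 : B (φ z) ⁅y, x⁆ = -B (φ z) ⁅x, y⁆ := by rw [← lie_skew, map_neg]
      linarith
  -- surjectivity construction
  have hsurj : ∀ ω ∈ Z2set g, ∃ φ ∈ AntisymDer B, iota7 B φ = ω := by
    rintro ω ⟨halt, hcoc⟩
    set φ : g →ₗ[ℝ] g := (B.toDual hnd).symm.toLinearMap ∘ₗ ω with hφ
    have hφa : ∀ x y, B (φ x) y = ω x y := by
      intro x y
      exact LinearMap.BilinForm.apply_toDual_symm_apply (hB := hnd) (ω x) y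
    have hsk := hskw ω halt
    have hasym : ∀ x y, B (φ x) y = -(B x (φ y)) := by
      intro x y
      rw [hφa, hsymm x (φ y), hφa, hsk x y]
    refine ⟨φ, ⟨?_, hasym⟩, ?_⟩
    · intro x y
      refine hext _ _ fun z => ?_
      rw [hφa, map_add, LinearMap.add_apply, hB2 (φ x) y z]
      have h4 : (⁅x, φ y⁆ : g) = -⁅φ y, x⁆ := by rw [← lie_skew]
      rw [h4, map_neg, LinearMap.neg_apply, hB2 (φ y) x z, hφa, hφa]
      have hc := hcoc x y z
      have g1 : ω ⁅y, z⁆ x = -ω x ⁅y, z⁆ := hsk _ _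
      have g2 : ω ⁅z, x⁆ y = -ω y ⁅z, x⁆ := hsk _ _
      have g3 : ω y ⁅z, x⁆ = -ω y ⁅x, z⁆ := by rw [← lie_skew, map_neg]
      linarith
    · ext x y
      exact hφa x y
  have hbij : Set.BijOn (iota7 B) (AntisymDer B) (Z2set g) := by
    refine ⟨hmt, fun φ _ ψ _ h => hinj φ ψ h, ?_⟩
    rintro ω hω
    obtain ⟨φ, hφ, hφω⟩ := hsurj ω hω
    exact ⟨φ, hφ, hφω⟩
  have himg : iota7 B '' {φ : g →ₗ[ℝ] g | ∃ x₀ : g, ∀ y, φ y = ⁅x₀, y⁆} = B2set B := by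
    ext ω
    constructor
    · rintro ⟨φ, ⟨x₀, hx₀⟩, rfl⟩
      refine ⟨x₀, fun x y => ?_⟩
      rw [happ, hx₀ x, hB2]
    · rintro ⟨x₀, hx₀⟩
      refine ⟨(LieAlgebra.ad ℝ g x₀ : g →ₗ[ℝ] g), ⟨x₀, fun y => rfl⟩, ?_⟩
      ext x y
      rw [happ, LieAlgebra.ad_apply, hB2, ← hx₀]
  -- maps DerDm into Z2 ∩ DTheta
  have hmtD : ∀ φ ∈ DerDm B D θ, iota7 B φ ∈ Z2set g ∩ DThetaSet D θ := by
    rintro φ ⟨hA, hφD, hφθ⟩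
    refine ⟨hmt φ hA, ?_, ?_⟩
    · intro x y
      have h1 : φ (D x) = D (φ x) := LinearMap.congr_fun hφD x
      simp only [happ]
      rw [h1]
      have h2 := hDskew (φ x) y
      linarith
    · intro x y
      have h1 : θ (φ (θ x)) = -φ (θ (θ x)) := by
        have := LinearMap.congr_fun hφθ (θ x)
        simpa using this
      rw [hθp x] at h1
      have h3 : φ (θ x) = -θ (φ x) := by
        have h5 := congrArg θ h1
        rw [hθp, map_neg] at h5
        exact h5
      simp only [happ]
      rw [h3, map_neg, LinearMap.neg_apply, hθiso]
  have hbijD : Set.BijOn (iota7 B) (DerDm B D θ) (Z2set g ∩ DThetaSet D θ) := by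
    refine ⟨hmtD, fun φ _ ψ _ h => hinj φ ψ h, ?_⟩
    rintro ω ⟨hZ, hDi, hθi⟩
    obtain ⟨φ, hφA, rfl⟩ := hsurj ω hZ
    refine ⟨φ, ⟨hφA, ?_, ?_⟩, rfl⟩
    · ext x
      refine hext _ _ fun y => ?_
      have h1 := hDi x y
      simp only [happ] at h1
      have h2 := hDskew (φ x) y
      simp only [LinearMap.comp_apply]
      linarith
    · ext x
      refine hext _ _ fun y => ?_
      have h1 := hθi x (θ y)
      rw [hθp y] at h1
      simp only [happ] at h1
      have h2 : B (θ (φ x)) y = B (φ x) (θ y) := by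
        have := hθiso (φ x) (θ y)
        rwa [hθp y] at this
      simp only [LinearMap.comp_apply, LinearMap.neg_apply, map_neg]
      rw [h2, ← neg_neg (B (φ x) (θ y)), ← h1]
  -- centrality under D
  have hcD : ∀ c : g, (∀ w : g, ⁅c, w⁆ = 0) → ∀ w : g, ⁅D c, w⁆ = 0 := by
    intro c hc w
    have h := hDder c w
    rw [hc w, map_zero, hc (D w), add_zero] at h
    exact h.symm
  -- the set equality DerDm ∩ ad(g) = ad(g₋⁺)
  have hadeq : DerDm B D θ ∩ {φ : g →ₗ[ℝ] g | ∃ x₀ : g, ∀ y, φ y = ⁅x₀, y⁆} =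
      {φ : g →ₗ[ℝ] g | ∃ x₀ ∈ LinearMap.ker (θ + LinearMap.id) ⊓ LinearMap.ker D,
        ∀ y, φ y = ⁅x₀, y⁆} := by
    ext φ
    constructor
    · rintro ⟨⟨⟨hder, hasym⟩, hφD, hφθ⟩, x₀, hx₀⟩
      have hc1 : ∀ w : g, ⁅D x₀, w⁆ = 0 := by
        intro w
        have h1 : φ (D w) = D (φ w) := LinearMap.congr_fun hφD w
        rw [hx₀, hx₀] at h1
        have h2 := hDder x₀ w
        rw [h1] at h2
        exact right_eq_add.mp h2
      have hc2 : ∀ w : g, ⁅θ x₀ + x₀, w⁆ = 0 := by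
        intro w
        have h1 : θ (φ (θ w)) = -φ (θ (θ w)) := by
          have := LinearMap.congr_fun hφθ (θ w)
          simpa using this
        rw [hθp w, hx₀, hx₀, hθlie, hθp w] at h1
        rw [add_lie, h1]
        exact neg_add_cancel _
      obtain ⟨x₁, hx₁⟩ : ∃ x₁ : g, x₁ = x₀ + D (D x₀) := ⟨_, rfl⟩
      have hDx₁ : D x₁ = 0 := by
        rw [hx₁, map_add, hD3p x₀]
        simp
      have hadx₁ : ∀ y : g, ⁅x₁, y⁆ = ⁅x₀, y⁆ := by
        intro y
        rw [hx₁, add_lie, hcD _ hc1 y, add_zero]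
      have hθx₁ : θ x₁ = θ x₀ + D (D (θ x₀)) := by
        rw [hx₁, map_add]
        congr 1
        rw [hθDp (D x₀), hθDp x₀, map_neg, neg_neg]
      have hsum : x₁ + θ x₁ = (θ x₀ + x₀) + D (D (θ x₀ + x₀)) := by
        rw [hθx₁, hx₁, map_add, map_add]
        abel
      have hcent₁ : ∀ w : g, ⁅x₁ + θ x₁, w⁆ = 0 := by
        intro w
        rw [hsum, add_lie, hc2 w, hcD _ (hcD _ hc2) w, add_zero]
      have h5 : D (θ x₁) = 0 := by rw [hDθp, hDx₁, map_zero, neg_zero]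
      refine ⟨x₁ - (1/2 : ℝ) • (x₁ + θ x₁), ?_, ?_⟩
      · rw [Submodule.mem_inf]
        constructor
        · rw [LinearMap.mem_ker, LinearMap.add_apply, LinearMap.id_apply,
            map_sub, map_smul, map_add, hθp]
          module
        · rw [LinearMap.mem_ker, map_sub, map_smul, map_add, hDx₁, h5]
          simp
      · intro y
        rw [hx₀ y, sub_lie, smul_lie, hcent₁ y, smul_zero, sub_zero, hadx₁ y]
    · rintro ⟨x₀, hmem, hx₀⟩
      rw [Submodule.mem_inf, LinearMap.mem_ker, LinearMap.mem_ker] at hmem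
      obtain ⟨hθ0, hD0⟩ := hmem
      have hθ0' : θ x₀ = -x₀ := by
        rw [LinearMap.add_apply, LinearMap.id_apply] at hθ0
        exact eq_neg_of_add_eq_zero_left hθ0
      refine ⟨⟨⟨fun x y => ?_, fun x y => ?_⟩, ?_, ?_⟩, x₀, hx₀⟩
      · rw [hx₀, hx₀, hx₀, leibniz_lie]
      · rw [hx₀, hx₀]
        have := hinv x₀ x y
        linarith
      · ext w
        simp only [LinearMap.comp_apply]
        rw [hx₀, hx₀, hDder, hD0, zero_lie, zero_add]
      · ext w
        simp only [LinearMap.comp_apply, LinearMap.neg_apply]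
        rw [hx₀, hx₀, hθlie, hθ0', neg_lie]
  -- DerDm is closed under subtraction
  have hDerSub : ∀ φ ∈ DerDm B D θ, ∀ ψ ∈ DerDm B D θ, φ - ψ ∈ DerDm B D θ := by
    rintro φ ⟨⟨hd1, ha1⟩, hD1, ht1⟩ ψ ⟨⟨hd2, ha2⟩, hD2, ht2⟩
    refine ⟨⟨fun x y => ?_, fun x y => ?_⟩, ?_, ?_⟩
    · simp only [LinearMap.sub_apply, hd1, hd2, sub_lie, lie_sub]
      abel
    · simp only [LinearMap.sub_apply, map_sub, ha1, ha2]
      ring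
    · rw [LinearMap.sub_comp, LinearMap.comp_sub, hD1, hD2]
    · rw [LinearMap.comp_sub, LinearMap.sub_comp, ht1, ht2]
      abel
  refine ⟨hadd, hsmul, hbij, himg, hbijD, hadeq, ?_⟩
  intro φ hφ ψ hψ
  constructor
  · rintro ⟨x₀, hmem, hpt⟩
    rw [← hsub]
    constructor
    · rw [← himg]
      exact ⟨φ - ψ, ⟨x₀, fun y => by rw [LinearMap.sub_apply]; exact hpt y⟩, rfl⟩
    · exact (hmtD _ (hDerSub φ hφ ψ hψ)).2
  · intro h
    rw [← hsub] at h
    obtain ⟨x₀, hx₀⟩ := h.1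
    have hpt : ∀ y, (φ - ψ) y = ⁅x₀, y⁆ := by
      intro y
      refine hext _ _ fun z => ?_
      rw [hB2 x₀ y z]
      exact hx₀ y z
    have hmemL : (φ - ψ) ∈ DerDm B D θ ∩ {φ : g →ₗ[ℝ] g | ∃ x₀ : g, ∀ y, φ y = ⁅x₀, y⁆} :=
      ⟨hDerSub φ hφ ψ hψ, x₀, hpt⟩
    rw [hadeq] at hmemL
    obtain ⟨x₀', hmem', hpt'⟩ := hmemL
    exact ⟨x₀', hmem', fun y => by rw [← hpt' y, LinearMap.sub_apply]⟩
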